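/- arXiv:2508.07694 — 6 statements merged into one kernel-verified Lean document; each statement's English description precedes it below -/
import Mathlib

section
/- Let 0 < a < b and α > 0 be real numbers and set σ = b/a. Then the critical viscosity μ_c = aα(1 + 3σ⁴ − 4σ² − 4σ⁴ ln σ)/(2(σ⁴ − 1 − 4σ⁴ ln σ)) is strictly positive. -/
open Real

lemma key1 {x : ℝ} (hx : 1 < x) : x - 1 < x * Real.log x := by
  have hx0 : 0 < x := lt_trans one_pos hx
  have h := Real.log_lt_sub_one_of_pos (x := x⁻¹) (by positivity) (by
    intro h; rw [inv_eq_one] at h; exact (ne_of_gt hx) h)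
  rw [Real.log_inv] at h
  have : 1 - x⁻¹ < Real.log x := by linarith
  have := (mul_lt_mul_iff_right₀ hx0).mpr this
  rw [mul_sub, mul_inv_cancel₀ (ne_of_gt hx0)] at this
  linarith

lemma key2 {x : ℝ} (hx : 1 < x) :
    3 * x ^ 2 - 4 * x + 1 < 2 * x ^ 2 * Real.log x := by
  set g : ℝ → ℝ := fun x => 2 * x ^ 2 * Real.log x - (3 * x ^ 2 - 4 * x + 1) with hg
  have hmono : StrictMonoOn g (Set.Ici 1) := by
    apply strictMonoOn_of_deriv_pos (convex_Ici 1)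
    · apply ContinuousOn.sub
      · apply ContinuousOn.mul (by fun_prop)
        exact Real.continuousOn_log.mono (fun y hy => by
          simp only [Set.mem_Ici] at hy; simp; linarith)
      · fun_prop
    · intro y hy
      rw [interior_Ici] at hy
      have hy1 : (1:ℝ) < y := hy
      have hy0 : 0 < y := lt_trans one_pos hy1
      have hd : HasDerivAt g (4 * y * Real.log y + 2 * y ^ 2 * y⁻¹ - (6 * y - 4)) y := by
        have h1 : HasDerivAt (fun x : ℝ => 2 * x ^ 2 * Real.log x)
            (4 * y * Real.log y + 2 * y ^ 2 * y⁻¹) y := by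
          have := ((hasDerivAt_pow 2 y).const_mul 2).mul (Real.hasDerivAt_log (ne_of_gt hy0))
          exact this.congr_deriv (by push_cast; ring)
        have h2 : HasDerivAt (fun x : ℝ => 3 * x ^ 2 - 4 * x + 1) (6 * y - 4) y := by
          have := (((hasDerivAt_pow 2 y).const_mul 3).sub
            ((hasDerivAt_id y).const_mul 4)).add_const 1
          exact this.congr_deriv (by push_cast; ring)
        exact h1.sub h2
      rw [hd.deriv]
      have h1 := key1 hy1
      have : 2 * y ^ 2 * y⁻¹ = 2 * y := by field_simp
      rw [this]
      nlinarith
  have := hmono (Set.self_mem_Ici) (Set.mem_Ici.mpr (le_of_lt hx)) hx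
  simp only [hg, Real.log_one] at this
  nlinarith [this]

/-- For `0 < a < b` and `α > 0`, with `σ = b / a`, the critical viscosity
`μ_c = aα(1 + 3σ⁴ − 4σ² − 4σ⁴ ln σ) / (2(σ⁴ − 1 − 4σ⁴ ln σ))` is strictly positive. -/
theorem critical_viscosity_pos (a b α : ℝ) (ha : 0 < a) (hab : a < b) (hα : 0 < α) :
    0 < a * α * (1 + 3 * (b / a) ^ 4 - 4 * (b / a) ^ 2 - 4 * (b / a) ^ 4 * Real.log (b / a)) /
        (2 * ((b / a) ^ 4 - 1 - 4 * (b / a) ^ 4 * Real.log (b / a))) := by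
  set σ := b / a with hσ
  have hσ1 : 1 < σ := (one_lt_div ha).mpr hab
  have hσ0 : 0 < σ := lt_trans one_pos hσ1
  -- denominator negative
  have hx4 : 1 < σ ^ 4 := one_lt_pow₀ hσ1 (by norm_num)
  have h1 := key1 hx4
  have hlog4 : Real.log (σ ^ 4) = 4 * Real.log σ := by
    rw [Real.log_pow]; push_cast; ring
  rw [hlog4] at h1
  have hD : σ ^ 4 - 1 - 4 * σ ^ 4 * Real.log σ < 0 := by nlinarith
  -- numerator negative
  have hx2 : 1 < σ ^ 2 := one_lt_pow₀ hσ1 (by norm_num)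
  have h2 := key2 hx2
  have hlog2 : Real.log (σ ^ 2) = 2 * Real.log σ := by
    rw [Real.log_pow]; push_cast; ring
  rw [hlog2] at h2
  have hsq : (σ ^ 2) ^ 2 = σ ^ 4 := by ring
  rw [hsq] at h2
  have hN : 1 + 3 * σ ^ 4 - 4 * σ ^ 2 - 4 * σ ^ 4 * Real.log σ < 0 := by nlinarith
  apply div_pos_of_neg_of_neg
  · nlinarith [mul_pos ha hα]
  · linarith
end

section
/- Let 0 < a < b, α > 0 and μ > 0 be real numbers. The determinant of the 4×4 real matrix whose rows are (a², a² ln a, 1, a⁴), (b², b² ln b, 1, b⁴), (b², b²(2 + ln b), 1, 9b⁴) and (−a²μ + αa³, a³α − a²μ ln a + a³α ln a, 3μ − aα, 3a⁵α + 3a⁴μ) vanishes if and only if μ = aα(1 + 3σ⁴ − 4σ² − 4σ⁴ ln σ)/(2(σ⁴ − 1 − 4σ⁴ ln σ)), where σ = b/a. -/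
/-- For `0 < a < b`, `α > 0` and `μ > 0`, the determinant of the 4×4 matrix
encoding the boundary conditions of the zero-eigenvalue problem vanishes if and only if
`μ = aα(1 + 3σ⁴ − 4σ² − 4σ⁴ ln σ) / (2(σ⁴ − 1 − 4σ⁴ ln σ))` with `σ = b / a`. -/
theorem det_vanishes_iff_critical_viscosity (a b α μ : ℝ)
    (ha : 0 < a) (hab : a < b) (hα : 0 < α) (hμ : 0 < μ) :
    Matrix.det
      !![a ^ 2, a ^ 2 * Real.log a, 1, a ^ 4;
         b ^ 2, b ^ 2 * Real.log b, 1, b ^ 4;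
         b ^ 2, b ^ 2 * (2 + Real.log b), 1, 9 * b ^ 4;
         -(a ^ 2 * μ) + α * a ^ 3,
           a ^ 3 * α - a ^ 2 * μ * Real.log a + a ^ 3 * α * Real.log a,
           3 * μ - a * α,
           3 * a ^ 5 * α + 3 * a ^ 4 * μ] = 0 ↔
    μ = a * α * (1 + 3 * (b / a) ^ 4 - 4 * (b / a) ^ 2 - 4 * (b / a) ^ 4 * Real.log (b / a)) /
        (2 * ((b / a) ^ 4 - 1 - 4 * (b / a) ^ 4 * Real.log (b / a))) := by
  have hb : 0 < b := ha.trans hab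
  have ha' : a ≠ 0 := ha.ne'
  have hb' : b ≠ 0 := hb.ne'
  set La := Real.log a with hLa
  set Lb := Real.log b with hLb
  have hlog : Real.log (b / a) = Lb - La := Real.log_div hb' ha'
  -- log bound: log b - log a ≥ 1 - a/b
  have hkey : La - Lb ≤ a / b - 1 := by
    have := Real.log_le_sub_one_of_pos (div_pos ha hb)
    rwa [Real.log_div ha' hb'] at this
  have hD : b ^ 4 - a ^ 4 - 4 * b ^ 4 * (Lb - La) < 0 := by
    have h1 : 4 * b ^ 4 * (La - Lb) ≤ 4 * b ^ 4 * (a / b - 1) :=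
      mul_le_mul_of_nonneg_left hkey (by positivity)
    have h2 : 4 * b ^ 4 * (a / b - 1) = 4 * a * b ^ 3 - 4 * b ^ 4 := by
      field_simp
    have hfac : 0 < (b - a) ^ 2 * (3 * b ^ 2 + 2 * a * b + a ^ 2) := by
      have hba : 0 < b - a := by linarith
      positivity
    nlinarith [h1, h2, hfac]
  have hD' : b ^ 4 - a ^ 4 - 4 * b ^ 4 * (Lb - La) ≠ 0 := hD.ne
  have h2D : 2 * (b ^ 4 - a ^ 4 - 4 * b ^ 4 * (Lb - La)) ≠ 0 := by
    intro h; apply hD'; linarith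
  have hdet : Matrix.det
      !![a ^ 2, a ^ 2 * La, 1, a ^ 4;
         b ^ 2, b ^ 2 * Lb, 1, b ^ 4;
         b ^ 2, b ^ 2 * (2 + Lb), 1, 9 * b ^ 4;
         -(a ^ 2 * μ) + α * a ^ 3,
           a ^ 3 * α - a ^ 2 * μ * La + a ^ 3 * α * La,
           3 * μ - a * α,
           3 * a ^ 5 * α + 3 * a ^ 4 * μ] =
      (4 * a ^ 2 * b ^ 2) *
        (2 * μ * (b ^ 4 - a ^ 4 - 4 * b ^ 4 * (Lb - La)) -
          a * α * (a ^ 4 + 3 * b ^ 4 - 4 * a ^ 2 * b ^ 2 - 4 * b ^ 4 * (Lb - La))) := by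
    simp [Matrix.det_succ_row_zero, Fin.sum_univ_succ, Matrix.det_fin_three, Fin.succAbove, Fin.castSucc, Fin.castAdd, Fin.castLE]
    ring
  have hrhs : a * α * (1 + 3 * (b / a) ^ 4 - 4 * (b / a) ^ 2 - 4 * (b / a) ^ 4 * (Lb - La)) /
        (2 * ((b / a) ^ 4 - 1 - 4 * (b / a) ^ 4 * (Lb - La))) =
      a * α * (a ^ 4 + 3 * b ^ 4 - 4 * a ^ 2 * b ^ 2 - 4 * b ^ 4 * (Lb - La)) /
        (2 * (b ^ 4 - a ^ 4 - 4 * b ^ 4 * (Lb - La))) := by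
    rw [div_eq_div_iff _ h2D]
    · field_simp
    · intro h
      apply hD'
      have ha4 : (0:ℝ) < a ^ 4 := by positivity
      have : a ^ 4 * (2 * ((b / a) ^ 4 - 1 - 4 * (b / a) ^ 4 * (Lb - La))) = 0 := by
        rw [h]; ring
      field_simp at this
      linarith
  rw [hlog, hdet, hrhs, eq_div_iff h2D]
  have h4 : (4 * a ^ 2 * b ^ 2 : ℝ) ≠ 0 := by positivity
  constructor
  · intro h
    have h5 := (mul_eq_zero.mp h).resolve_left h4
    linear_combination h5
  · intro h
    linear_combination (4 * a ^ 2 * b ^ 2) * h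
end

section
/- Let 0 < a < b, α > 0 and μ > 0 be real numbers. There exists a quadruple (c₁, c₂, c₃, c₄) ∈ ℝ⁴, not all zero, such that the function Ψ(r) = c₁ r + c₂ r ln r + c₃ r⁻¹ + c₄ r³ satisfies the four boundary conditions Ψ(a) = 0, Ψ(b) = 0, Ψ''(a) − (1/a − α/μ)Ψ'(a) = 0 and Ψ''(b) + Ψ'(b)/b = 0, if and only if μ = aα(1 + 3σ⁴ − 4σ² − 4σ⁴ ln σ)/(2(σ⁴ − 1 − 4σ⁴ ln σ)), where σ = b/a. -/
/-- The general solution `Ψ(r) = c₁ r + c₂ r ln r + c₃ r⁻¹ + c₄ r³` of `Δ₁²Ψ = 0`. -/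
noncomputable def genSol (c₁ c₂ c₃ c₄ : ℝ) : ℝ → ℝ :=
  fun r => c₁ * r + c₂ * r * Real.log r + c₃ * r⁻¹ + c₄ * r ^ 3

lemma hasDerivAt_genSol (c₁ c₂ c₃ c₄ r : ℝ) (hr : 0 < r) :
    HasDerivAt (genSol c₁ c₂ c₃ c₄)
      (c₁ + c₂ * (Real.log r + 1) - c₃ / r ^ 2 + 3 * c₄ * r ^ 2) r := by
  have h1 : HasDerivAt (fun x : ℝ => c₁ * x) c₁ r := by
    simpa using (hasDerivAt_id r).const_mul c₁
  have h2 : HasDerivAt (fun x : ℝ => c₂ * x * Real.log x)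
      (c₂ * Real.log r + c₂ * r * r⁻¹) r := by
    exact (((hasDerivAt_id r).const_mul c₂).mul (Real.hasDerivAt_log hr.ne')).congr_deriv (by simp)
  have h3 : HasDerivAt (fun x : ℝ => c₃ * x⁻¹) (c₃ * (-(r ^ 2)⁻¹)) r :=
    (hasDerivAt_inv hr.ne').const_mul c₃
  have h4 : HasDerivAt (fun x : ℝ => c₄ * x ^ 3) (c₄ * (3 * r ^ 2)) r := by
    simpa using (hasDerivAt_pow 3 r).const_mul c₄
  have := ((h1.add h2).add h3).add h4
  refine this.congr_deriv ?_
  field_simp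
  ring

lemma deriv_genSol (c₁ c₂ c₃ c₄ r : ℝ) (hr : 0 < r) :
    deriv (genSol c₁ c₂ c₃ c₄) r
      = c₁ + c₂ * (Real.log r + 1) - c₃ / r ^ 2 + 3 * c₄ * r ^ 2 :=
  (hasDerivAt_genSol c₁ c₂ c₃ c₄ r hr).deriv

lemma deriv2_genSol (c₁ c₂ c₃ c₄ r : ℝ) (hr : 0 < r) :
    deriv (deriv (genSol c₁ c₂ c₃ c₄)) r = c₂ / r + 2 * c₃ / r ^ 3 + 6 * c₄ * r := by
  have hev : deriv (genSol c₁ c₂ c₃ c₄) =ᶠ[nhds r]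
      fun x => c₁ + c₂ * (Real.log x + 1) - c₃ / x ^ 2 + 3 * c₄ * x ^ 2 := by
    filter_upwards [eventually_gt_nhds hr] with x hx
    exact deriv_genSol c₁ c₂ c₃ c₄ x hx
  rw [hev.deriv_eq]
  have h2 : HasDerivAt (fun x : ℝ => c₂ * (Real.log x + 1)) (c₂ * r⁻¹) r := by
    simpa using ((Real.hasDerivAt_log hr.ne').add_const 1).const_mul c₂
  have h3 : HasDerivAt (fun x : ℝ => c₃ / x ^ 2) (c₃ * (-(2 * r ^ 1) / (r ^ 2) ^ 2)) r := by
    have := ((hasDerivAt_pow 2 r).inv (by positivity)).const_mul c₃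
    simpa [div_eq_mul_inv] using this
  have h4 : HasDerivAt (fun x : ℝ => 3 * c₄ * x ^ 2) (3 * c₄ * (2 * r ^ 1)) r := by
    simpa using (hasDerivAt_pow 2 r).const_mul (3 * c₄)
  have := (((hasDerivAt_const r c₁).add h2).sub h3).add h4
  rw [show deriv (fun x => c₁ + c₂ * (Real.log x + 1) - c₃ / x ^ 2 + 3 * c₄ * x ^ 2) r = _ from this.deriv]
  field_simp
  ring

lemma key_pos (a b : ℝ) (ha : 0 < a) (hab : a < b) :
    0 < a ^ 4 - b ^ 4 + 4 * b ^ 4 * (Real.log b - Real.log a) := by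
  have hb : 0 < b := ha.trans hab
  have h1 : Real.log (a / b) < a / b - 1 :=
    Real.log_lt_sub_one_of_pos (by positivity) (((div_lt_one hb).2 hab).ne)
  rw [Real.log_div ha.ne' hb.ne'] at h1
  have h2 : (Real.log a - Real.log b) * b < a - b := by
    have : a / b - 1 = (a - b) / b := by field_simp
    rw [this] at h1
    exact (lt_div_iff₀ hb).1 h1
  nlinarith [mul_lt_mul_of_pos_left h2 (by positivity : (0:ℝ) < 4 * b ^ 3),
    mul_nonneg (mul_nonneg (sq_nonneg (b - a)) hb.le) hb.le,
    mul_nonneg (mul_nonneg (sq_nonneg (b - a)) ha.le) hb.le,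
    mul_nonneg (mul_nonneg (sq_nonneg (b - a)) ha.le) ha.le]

/-- For `0 < a < b`, `α > 0`, `μ > 0`, there is a nontrivial quadruple
`(c₁, c₂, c₃, c₄)` such that `Ψ(r) = c₁ r + c₂ r ln r + c₃ r⁻¹ + c₄ r³` satisfies the four
boundary conditions `Ψ(a) = 0`, `Ψ(b) = 0`, `Ψ''(a) − (1/a − α/μ)Ψ'(a) = 0`,
`Ψ''(b) + Ψ'(b)/b = 0`, if and only if `μ` equals the critical viscosity. -/
theorem nontrivial_solution_iff_critical_viscosity (a b α μ : ℝ)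
    (ha : 0 < a) (hab : a < b) (hα : 0 < α) (hμ : 0 < μ) :
    (∃ c₁ c₂ c₃ c₄ : ℝ, ¬(c₁ = 0 ∧ c₂ = 0 ∧ c₃ = 0 ∧ c₄ = 0) ∧
      genSol c₁ c₂ c₃ c₄ a = 0 ∧
      genSol c₁ c₂ c₃ c₄ b = 0 ∧
      deriv (deriv (genSol c₁ c₂ c₃ c₄)) a
        - (1 / a - α / μ) * deriv (genSol c₁ c₂ c₃ c₄) a = 0 ∧
      deriv (deriv (genSol c₁ c₂ c₃ c₄)) b
        + deriv (genSol c₁ c₂ c₃ c₄) b / b = 0) ↔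
    μ = a * α * (1 + 3 * (b / a) ^ 4 - 4 * (b / a) ^ 2 - 4 * (b / a) ^ 4 * Real.log (b / a)) /
        (2 * ((b / a) ^ 4 - 1 - 4 * (b / a) ^ 4 * Real.log (b / a))) := by
  have hb : 0 < b := ha.trans hab
  have ha' : a ≠ 0 := ha.ne'
  have hb' : b ≠ 0 := hb.ne'
  have hμ' : μ ≠ 0 := hμ.ne'
  have h2ab : a ^ 2 - b ^ 2 ≠ 0 := by nlinarith
  have hL : Real.log (b / a) = Real.log b - Real.log a := Real.log_div hb' ha'
  have hkp := key_pos a b ha hab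
  have hdenneg : (b / a) ^ 4 - 1 - 4 * (b / a) ^ 4 * Real.log (b / a) < 0 := by
    rw [hL]
    have hexp : (b / a) ^ 4 - 1 - 4 * (b / a) ^ 4 * (Real.log b - Real.log a)
        = -((a ^ 4 - b ^ 4 + 4 * b ^ 4 * (Real.log b - Real.log a)) / a ^ 4) := by
      field_simp
      ring
    rw [hexp]
    have : 0 < (a ^ 4 - b ^ 4 + 4 * b ^ 4 * (Real.log b - Real.log a)) / a ^ 4 := by
      positivity
    linarith
  have hden : 2 * ((b / a) ^ 4 - 1 - 4 * (b / a) ^ 4 * Real.log (b / a)) ≠ 0 := by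
    intro h; linarith
  constructor
  · rintro ⟨c₁, c₂, c₃, c₄, hne, h1, h2, h3, h4⟩
    rw [deriv2_genSol _ _ _ _ _ ha, deriv_genSol _ _ _ _ _ ha] at h3
    rw [deriv2_genSol _ _ _ _ _ hb, deriv_genSol _ _ _ _ _ hb] at h4
    simp only [genSol] at h1 h2
    have E1 : a ^ 2 * c₁ + a ^ 2 * Real.log a * c₂ + c₃ + a ^ 4 * c₄ = 0 := by
      field_simp at h1
      linear_combination h1
    have E2 : b ^ 2 * c₁ + b ^ 2 * Real.log b * c₂ + c₃ + b ^ 4 * c₄ = 0 := by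
      field_simp at h2
      linear_combination h2
    have E4 : b ^ 2 * c₁ + b ^ 2 * (Real.log b + 2) * c₂ + c₃ + 9 * b ^ 4 * c₄ = 0 := by
      field_simp at h4
      apply mul_left_cancel₀ (show (b:ℝ) ^ 4 ≠ 0 by positivity)
      linear_combination b ^ 4 * h4
    have E3 : μ * (a ^ 2 * c₂ + 2 * c₃ + 6 * a ^ 4 * c₄)
        - (a ^ 2 * μ - a ^ 3 * α) * c₁
        - (a ^ 2 * μ - a ^ 3 * α) * (Real.log a + 1) * c₂
        + (μ - a * α) * c₃ - 3 * (a ^ 4 * μ - a ^ 5 * α) * c₄ = 0 := by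
      field_simp at h3
      apply mul_left_cancel₀ (show (a:ℝ) ^ 4 ≠ 0 by positivity)
      linear_combination a ^ 4 * h3
    have hc2 : c₂ = -4 * b ^ 2 * c₄ := by
      have h2b : (2 * b ^ 2 : ℝ) ≠ 0 := by positivity
      apply mul_left_cancel₀ h2b
      linear_combination E4 - E2
    have hc1 : (a ^ 2 - b ^ 2) * c₁
        = (b ^ 4 - a ^ 4 + 4 * a ^ 2 * b ^ 2 * Real.log a - 4 * b ^ 4 * Real.log b) * c₄ := by
      linear_combination E1 - E2 - (a ^ 2 * Real.log a - b ^ 2 * Real.log b) * hc2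
    have hc3 : (a ^ 2 - b ^ 2) * c₃
        = a ^ 2 * b ^ 2 * (a ^ 2 - b ^ 2 + 4 * b ^ 2 * (Real.log b - Real.log a)) * c₄ := by
      linear_combination (a ^ 2 - b ^ 2) * E1 - a ^ 2 * hc1
        - a ^ 2 * Real.log a * (a ^ 2 - b ^ 2) * hc2
    have hc4 : c₄ ≠ 0 := by
      intro h
      apply hne
      subst h
      have hc2' : c₂ = 0 := by simpa using hc2
      have hc1' : c₁ = 0 := by
        rcases mul_eq_zero.1 (by linarith [hc1] : (a ^ 2 - b ^ 2) * c₁ = 0) with h' | h'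
        · exact absurd h' h2ab
        · exact h'
      have hc3' : c₃ = 0 := by
        rcases mul_eq_zero.1 (by linarith [hc3] : (a ^ 2 - b ^ 2) * c₃ = 0) with h' | h'
        · exact absurd h' h2ab
        · exact h'
      exact ⟨hc1', hc2', hc3', rfl⟩
    have key : μ * (2 * (a ^ 4 - b ^ 4 + 4 * b ^ 4 * (Real.log b - Real.log a)))
        = a * α * (-a ^ 4 + 4 * a ^ 2 * b ^ 2 - 3 * b ^ 4
            + 4 * b ^ 4 * (Real.log b - Real.log a)) := by
      have hcc : (2 * a ^ 2 * c₄ : ℝ) ≠ 0 := by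
        apply mul_ne_zero (by positivity) hc4
      apply mul_right_cancel₀ hcc
      linear_combination (a ^ 2 - b ^ 2) * E3 + (a ^ 2 * μ - a ^ 3 * α) * hc1
        + ((a ^ 2 * μ - a ^ 3 * α) * (Real.log a + 1) - μ * a ^ 2) * (a ^ 2 - b ^ 2) * hc2
        - (3 * μ - a * α) * hc3
    rw [eq_div_iff hden, hL]
    field_simp
    linear_combination (-1) * key
  · intro hmu
    rw [eq_div_iff hden, hL] at hmu
    have key : μ * (2 * (a ^ 4 - b ^ 4 + 4 * b ^ 4 * (Real.log b - Real.log a)))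
        = a * α * (-a ^ 4 + 4 * a ^ 2 * b ^ 2 - 3 * b ^ 4
            + 4 * b ^ 4 * (Real.log b - Real.log a)) := by
      field_simp at hmu
      apply mul_right_cancel₀ (show (a:ℝ) ^ 10 ≠ 0 by positivity)
      linear_combination -(a ^ 10) * hmu
    refine ⟨b ^ 4 - a ^ 4 + 4 * a ^ 2 * b ^ 2 * Real.log a - 4 * b ^ 4 * Real.log b,
      -4 * b ^ 2 * (a ^ 2 - b ^ 2),
      a ^ 2 * b ^ 2 * (a ^ 2 - b ^ 2 + 4 * b ^ 2 * (Real.log b - Real.log a)),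
      a ^ 2 - b ^ 2, ?_, ?_, ?_, ?_, ?_⟩
    · rintro ⟨-, -, -, h4⟩
      exact h2ab h4
    · simp only [genSol]
      field_simp
      ring
    · simp only [genSol]
      field_simp
      ring
    · rw [deriv2_genSol _ _ _ _ _ ha, deriv_genSol _ _ _ _ _ ha]
      field_simp
      linear_combination 2 * key
    · rw [deriv2_genSol _ _ _ _ _ hb, deriv_genSol _ _ _ _ _ hb]
      field_simp
      ring
end

section
/- Let 0 < a < b, let Φ : ℝ → ℝ be four times differentiable on the interval (ln a, ln b), and define Ψ : ℝ → ℝ by Ψ(r) = r² Φ(ln r) for r ∈ (a, b). Then Δ₁(Δ₁Ψ)(r) = 0 for all r ∈ (a, b) if and only if Φ⁽⁴⁾(s) + 4Φ⁽³⁾(s) + 2Φ''(s) − 4Φ'(s) − 3Φ(s) = 0 for all s ∈ (ln a, ln b). -/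
/-- The operator `(Δ_n Ψ)(r) = Ψ''(r) + Ψ'(r)/r − n² Ψ(r)/r²`. -/
noncomputable def DeltaOp (n : ℕ) (Ψ : ℝ → ℝ) : ℝ → ℝ :=
  fun r => deriv (deriv Ψ) r + deriv Ψ r / r - (n : ℝ) ^ 2 * Ψ r / r ^ 2

/-- With `0 < a < b`, `Φ` four times differentiable on `(ln a, ln b)` and
`Ψ(r) = r² Φ(ln r)` on `(a, b)`, one has `Δ₁(Δ₁Ψ) = 0` on `(a, b)` iff
`Φ⁽⁴⁾ + 4Φ⁽³⁾ + 2Φ'' − 4Φ' − 3Φ = 0` on `(ln a, ln b)`. -/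
theorem biharmonic_iff_constant_coefficients (a b : ℝ) (ha : 0 < a) (hab : a < b)
    (Φ Ψ : ℝ → ℝ)
    (hΦ : ∀ s ∈ Set.Ioo (Real.log a) (Real.log b), ∀ k : ℕ, k ≤ 3 →
      DifferentiableAt ℝ (iteratedDeriv k Φ) s)
    (hΨ : ∀ r ∈ Set.Ioo a b, Ψ r = r ^ 2 * Φ (Real.log r)) :
    (∀ r ∈ Set.Ioo a b, DeltaOp 1 (DeltaOp 1 Ψ) r = 0) ↔
    (∀ s ∈ Set.Ioo (Real.log a) (Real.log b),
      iteratedDeriv 4 Φ s + 4 * iteratedDeriv 3 Φ s + 2 * iteratedDeriv 2 Φ s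
        - 4 * deriv Φ s - 3 * Φ s = 0) := by
  set S := Set.Ioo (Real.log a) (Real.log b) with hSdef
  set I := Set.Ioo a b with hIdef
  -- membership of log r in S
  have hrpos : ∀ r ∈ I, (0:ℝ) < r := fun r hr => ha.trans hr.1
  have hlogmem : ∀ r ∈ I, Real.log r ∈ S := by
    intro r hr
    exact ⟨Real.log_lt_log ha hr.1, Real.log_lt_log (hrpos r hr) hr.2⟩
  -- derivative of iterated derivatives
  have hDk : ∀ k : ℕ, k ≤ 3 → ∀ s ∈ S, HasDerivAt (iteratedDeriv k Φ)
      (iteratedDeriv (k+1) Φ s) s := by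
    intro k hk s hs
    have h := (hΦ s hs k hk).hasDerivAt
    simpa [iteratedDeriv_succ] using h
  -- composition with log
  have hcomp : ∀ k : ℕ, k ≤ 3 → ∀ r ∈ I, HasDerivAt (fun x => iteratedDeriv k Φ (Real.log x))
      (iteratedDeriv (k+1) Φ (Real.log r) * r⁻¹) r := by
    intro k hk r hr
    exact (hDk k hk _ (hlogmem r hr)).comp r (Real.hasDerivAt_log (hrpos r hr).ne')
  have hΦ0 : ∀ r ∈ I, HasDerivAt (fun x => Φ (Real.log x))
      (deriv Φ (Real.log r) * r⁻¹) r := by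
    intro r hr
    have := hcomp 0 (by norm_num) r hr
    simpa [iteratedDeriv_one, iteratedDeriv_zero] using this
  -- first derivative of Ψ
  have hd1 : ∀ r ∈ I, deriv Ψ r
      = 2 * r * Φ (Real.log r) + r * iteratedDeriv 1 Φ (Real.log r) := by
    intro r hr
    have heq : Ψ =ᶠ[nhds r] fun x => x ^ 2 * Φ (Real.log x) := by
      filter_upwards [isOpen_Ioo.mem_nhds hr] with x hx using hΨ x hx
    rw [heq.deriv_eq]
    have h : HasDerivAt (fun x => x ^ 2 * Φ (Real.log x))
        (2 * r * Φ (Real.log r) + r * iteratedDeriv 1 Φ (Real.log r)) r := by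
      have hpow : HasDerivAt (fun x : ℝ => x ^ 2) (2 * r) r := by
        simpa using hasDerivAt_pow 2 r
      have this : HasDerivAt (fun x => x ^ 2 * Φ (Real.log x)) _ r := hpow.mul (hΦ0 r hr)
      convert this using 1
      have hr0 : r ≠ 0 := (hrpos r hr).ne'
      rw [iteratedDeriv_one]
      field_simp
    exact h.deriv
  -- second derivative of Ψ
  have hd2 : ∀ r ∈ I, deriv (deriv Ψ) r
      = 2 * Φ (Real.log r) + 3 * iteratedDeriv 1 Φ (Real.log r)
        + iteratedDeriv 2 Φ (Real.log r) := by
    intro r hr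
    have heq : deriv Ψ =ᶠ[nhds r]
        fun x => 2 * x * Φ (Real.log x) + x * iteratedDeriv 1 Φ (Real.log x) := by
      filter_upwards [isOpen_Ioo.mem_nhds hr] with x hx using hd1 x hx
    rw [heq.deriv_eq]
    have hr0 : r ≠ 0 := (hrpos r hr).ne'
    have h1 : HasDerivAt (fun x : ℝ => 2 * x * Φ (Real.log x))
        (2 * Φ (Real.log r) + 2 * r * (deriv Φ (Real.log r) * r⁻¹)) r := by
      have hlin : HasDerivAt (fun x : ℝ => 2 * x) 2 r := by
        simpa using (hasDerivAt_id r).const_mul (2:ℝ)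
      exact hlin.mul (hΦ0 r hr)
    have h2 : HasDerivAt (fun x : ℝ => x * iteratedDeriv 1 Φ (Real.log x))
        (iteratedDeriv 1 Φ (Real.log r) + r * (iteratedDeriv 2 Φ (Real.log r) * r⁻¹)) r := by
      have this : HasDerivAt (fun x => x * iteratedDeriv 1 Φ (Real.log x)) _ r :=
        (hasDerivAt_id r).mul (hcomp 1 (by norm_num) r hr)
      convert this using 1
      simp only [id_eq]
      ring
    have h := (show HasDerivAt
      (fun x => 2 * x * Φ (Real.log x) + x * iteratedDeriv 1 Φ (Real.log x)) _ r from h1.add h2).deriv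
    rw [h, iteratedDeriv_one]
    field_simp
    ring
  -- DeltaOp 1 Ψ = G ∘ log
  set G : ℝ → ℝ := fun s => 3 * Φ s + 4 * iteratedDeriv 1 Φ s + iteratedDeriv 2 Φ s with hGdef
  have hW : ∀ r ∈ I, DeltaOp 1 Ψ r = G (Real.log r) := by
    intro r hr
    have hr0 : r ≠ 0 := (hrpos r hr).ne'
    simp only [DeltaOp, hd1 r hr, hd2 r hr, hΨ r hr, hGdef]
    field_simp
    ring
  -- H := G', the derivative of G
  set H : ℝ → ℝ := fun s => 3 * iteratedDeriv 1 Φ s + 4 * iteratedDeriv 2 Φ s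
      + iteratedDeriv 3 Φ s with hHdef
  have hG' : ∀ s ∈ S, HasDerivAt G (H s) s := by
    intro s hs
    have h0 := (hDk 0 (by norm_num) s hs).const_mul (3:ℝ)
    have h1 := (hDk 1 (by norm_num) s hs).const_mul (4:ℝ)
    have h2 := hDk 2 (by norm_num) s hs
    have this : HasDerivAt
      (fun y => 3 * iteratedDeriv 0 Φ y + 4 * iteratedDeriv 1 Φ y + iteratedDeriv 2 Φ y) _ s :=
      (h0.add h1).add h2
    simpa [hGdef, hHdef, iteratedDeriv_zero] using this
  have hH' : ∀ s ∈ S, HasDerivAt H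
      (3 * iteratedDeriv 2 Φ s + 4 * iteratedDeriv 3 Φ s + iteratedDeriv 4 Φ s) s := by
    intro s hs
    have h1 := (hDk 1 (by norm_num) s hs).const_mul (3:ℝ)
    have h2 := (hDk 2 (by norm_num) s hs).const_mul (4:ℝ)
    have h3 := hDk 3 (by norm_num) s hs
    have this : HasDerivAt
      (fun y => 3 * iteratedDeriv 1 Φ y + 4 * iteratedDeriv 2 Φ y + iteratedDeriv 3 Φ y) _ s :=
      (h1.add h2).add h3
    simpa [hHdef] using this
  -- first derivative of W := DeltaOp 1 Ψ
  have hWd1 : ∀ r ∈ I, deriv (DeltaOp 1 Ψ) r = H (Real.log r) * r⁻¹ := by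
    intro r hr
    have heq : DeltaOp 1 Ψ =ᶠ[nhds r] fun x => G (Real.log x) := by
      filter_upwards [isOpen_Ioo.mem_nhds hr] with x hx using hW x hx
    rw [heq.deriv_eq]
    exact ((hG' _ (hlogmem r hr)).comp r (Real.hasDerivAt_log (hrpos r hr).ne')).deriv
  -- second derivative of W
  have hWd2 : ∀ r ∈ I, deriv (deriv (DeltaOp 1 Ψ)) r
      = ((3 * iteratedDeriv 2 Φ (Real.log r) + 4 * iteratedDeriv 3 Φ (Real.log r)
        + iteratedDeriv 4 Φ (Real.log r)) - H (Real.log r)) / r ^ 2 := by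
    intro r hr
    have hr0 : r ≠ 0 := (hrpos r hr).ne'
    have heq : deriv (DeltaOp 1 Ψ) =ᶠ[nhds r] fun x => H (Real.log x) * x⁻¹ := by
      filter_upwards [isOpen_Ioo.mem_nhds hr] with x hx using hWd1 x hx
    rw [heq.deriv_eq]
    have hHc : HasDerivAt (fun x => H (Real.log x))
        ((3 * iteratedDeriv 2 Φ (Real.log r) + 4 * iteratedDeriv 3 Φ (Real.log r)
          + iteratedDeriv 4 Φ (Real.log r)) * r⁻¹) r :=
      (hH' _ (hlogmem r hr)).comp r (Real.hasDerivAt_log hr0)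
    have hinv : HasDerivAt (fun x : ℝ => x⁻¹) (-(r ^ 2)⁻¹) r := by
      simpa using hasDerivAt_inv hr0
    have h := (show HasDerivAt (fun x => H (Real.log x) * x⁻¹) _ r from hHc.mul hinv).deriv
    rw [h]
    field_simp
    ring
  -- the key formula
  have hkey : ∀ r ∈ I, DeltaOp 1 (DeltaOp 1 Ψ) r
      = (iteratedDeriv 4 Φ (Real.log r) + 4 * iteratedDeriv 3 Φ (Real.log r)
        + 2 * iteratedDeriv 2 Φ (Real.log r) - 4 * iteratedDeriv 1 Φ (Real.log r)
        - 3 * Φ (Real.log r)) / r ^ 2 := by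
    intro r hr
    have hr0 : r ≠ 0 := (hrpos r hr).ne'
    have hunfold : DeltaOp 1 (DeltaOp 1 Ψ) r = deriv (deriv (DeltaOp 1 Ψ)) r
        + deriv (DeltaOp 1 Ψ) r / r - (1:ℝ) ^ 2 * DeltaOp 1 Ψ r / r ^ 2 := by
        simp [DeltaOp]
    rw [hunfold, hWd1 r hr, hWd2 r hr, hW r hr]
    simp only [hGdef, hHdef]
    field_simp
    ring
  constructor
  · intro h s hs
    set r := Real.exp s with hrdef
    have hrI : r ∈ I := by
      constructor
      · calc a = Real.exp (Real.log a) := (Real.exp_log ha).symm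
          _ < r := Real.exp_lt_exp.mpr hs.1
      · calc r < Real.exp (Real.log b) := Real.exp_lt_exp.mpr hs.2
          _ = b := Real.exp_log (ha.trans hab)
    have := h r hrI
    rw [hkey r hrI] at this
    rw [Real.log_exp] at this
    have hr2 : (r:ℝ) ^ 2 ≠ 0 := pow_ne_zero _ (Real.exp_ne_zero s)
    have h0 := (div_eq_zero_iff.mp this).resolve_right hr2
    rw [← iteratedDeriv_one]
    linarith
  · intro h r hr
    rw [hkey r hr]
    have := h (Real.log r) (hlogmem r hr)
    rw [← iteratedDeriv_one] at this
    rw [this, zero_div]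
end

section
/- Let 0 < a < b, let n ≥ 1 be a natural number, and let Ψ : ℝ → ℝ be twice continuously differentiable on [a, b] with Ψ(a) = Ψ(b) = 0. Then ∫_a^b r ((Δ_{n+1}Ψ)(r))² dr − ∫_a^b r ((Δ_nΨ)(r))² dr ≥ (2n+1) ∫_a^b (2/r) (Ψ'(r) − Ψ(r)/r)² dr, and the inequality is strict if Ψ is not identically zero on [a, b]. -/
open MeasureTheory

/-- For `0 < a < b`, `n ≥ 1`, and `Ψ` twice continuously differentiable on
`[a, b]` with `Ψ(a) = Ψ(b) = 0`, one has
`∫ r (Δ_{n+1}Ψ)² − ∫ r (Δ_nΨ)² ≥ (2n+1) ∫ (2/r)(Ψ' − Ψ/r)²`,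
with strict inequality if `Ψ` is not identically zero on `[a, b]`. -/
theorem delta_monotonicity_inequality (a b : ℝ) (ha : 0 < a) (hab : a < b)
    (n : ℕ) (hn : 1 ≤ n) (Ψ : ℝ → ℝ)
    (hΨ : ContDiffOn ℝ 2 Ψ (Set.Icc a b)) (hΨa : Ψ a = 0) (hΨb : Ψ b = 0) :
    ((∫ r in Set.Ioo a b, r * (DeltaOp (n + 1) Ψ r) ^ 2)
        - (∫ r in Set.Ioo a b, r * (DeltaOp n Ψ r) ^ 2)
      ≥ (2 * (n : ℝ) + 1) * ∫ r in Set.Ioo a b, (2 / r) * (deriv Ψ r - Ψ r / r) ^ 2)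
    ∧ ((∃ r ∈ Set.Icc a b, Ψ r ≠ 0) →
      (∫ r in Set.Ioo a b, r * (DeltaOp (n + 1) Ψ r) ^ 2)
          - (∫ r in Set.Ioo a b, r * (DeltaOp n Ψ r) ^ 2)
        > (2 * (n : ℝ) + 1) * ∫ r in Set.Ioo a b, (2 / r) * (deriv Ψ r - Ψ r / r) ^ 2) := by
  have hab' : a ≤ b := hab.le
  have hu : UniqueDiffOn ℝ (Set.Icc a b) := uniqueDiffOn_Icc hab
  set S := Set.Icc a b with hS
  set φ : ℝ → ℝ := derivWithin Ψ S with hφdef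
  set φ2 : ℝ → ℝ := derivWithin φ S with hφ2def
  have hΨc : ContinuousOn Ψ S := hΨ.continuousOn
  have hφ1 : ContDiffOn ℝ 1 φ S := hΨ.derivWithin hu (by norm_num)
  have hφc : ContinuousOn φ S := hφ1.continuousOn
  have hφ2c : ContinuousOn φ2 S :=
    (ContDiffOn.derivWithin (m := 0) hφ1 hu (by norm_num)).continuousOn
  have hr0 : ∀ r ∈ S, r ≠ 0 := fun r hr => (lt_of_lt_of_le ha hr.1).ne'
  have hrS : ∀ r ∈ Set.Ioo a b, S ∈ nhds r := fun r hr => Icc_mem_nhds hr.1 hr.2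
  have hΨd : ∀ r ∈ Set.Ioo a b, HasDerivAt Ψ (φ r) r := by
    intro r hr
    exact ((hΨ.differentiableOn (by norm_num) r
      (Set.Ioo_subset_Icc_self hr)).hasDerivWithinAt).hasDerivAt (hrS r hr)
  have hφd : ∀ r ∈ Set.Ioo a b, HasDerivAt φ (φ2 r) r := by
    intro r hr
    exact ((hφ1.differentiableOn (by norm_num) r
      (Set.Ioo_subset_Icc_self hr)).hasDerivWithinAt).hasDerivAt (hrS r hr)
  have hderiv1 : ∀ r ∈ Set.Ioo a b, deriv Ψ r = φ r := fun r hr => (hΨd r hr).deriv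
  have hderiv2 : ∀ r ∈ Set.Ioo a b, deriv (deriv Ψ) r = φ2 r := by
    intro r hr
    have heq : deriv Ψ =ᶠ[nhds r] φ :=
      Filter.eventuallyEq_of_mem (Ioo_mem_nhds hr.1 hr.2) (fun x hx => hderiv1 x hx)
    exact ((hφd r hr).congr_of_eventuallyEq heq).deriv
  -- the function for integration by parts
  set g' : ℝ → ℝ := fun r => -2 * (φ r)^2 / r - 2 * Ψ r * φ2 r / r + 2 * Ψ r * φ r / r^2
    with hg'def
  set G : ℝ → ℝ := fun r => -2 * Ψ r * φ r / r with hGdef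
  have hGc : ContinuousOn G S :=
    ((continuousOn_const.mul hΨc).mul hφc).div continuousOn_id hr0
  have hGd : ∀ r ∈ Set.Ioo a b, HasDerivAt G (g' r) r := by
    intro r hr
    have hrne : r ≠ 0 := hr0 r (Set.Ioo_subset_Icc_self hr)
    have h1 : HasDerivAt (fun x => -2 * Ψ x * φ x)
        ((-2 * φ r) * φ r + (-2 * Ψ r) * φ2 r) r :=
      ((hΨd r hr).const_mul (-2)).mul (hφd r hr)
    have h2 := h1.fun_div (hasDerivAt_id r) hrne
    simp only [hGdef, hg'def, id_eq] at h2 ⊢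
    refine h2.congr_deriv ?_
    field_simp
    ring
  have hg'c : ContinuousOn g' S := by
    refine ContinuousOn.add (ContinuousOn.sub ?_ ?_) ?_
    · exact (continuousOn_const.mul (hφc.pow 2)).div continuousOn_id hr0
    · exact ((continuousOn_const.mul hΨc).mul hφ2c).div continuousOn_id hr0
    · exact ((continuousOn_const.mul hΨc).mul hφc).div (continuousOn_id.pow 2)
        (fun r hr => pow_ne_zero 2 (hr0 r hr))
  have hK : (∫ r in Set.Ioo a b, g' r) = 0 := by
    have hg'u : ContinuousOn g' (Set.uIcc a b) := by rw [Set.uIcc_of_le hab']; exact hg'c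
    have hFTC := intervalIntegral.integral_eq_sub_of_hasDeriv_right_of_le hab' hGc
      (fun x hx => (hGd x hx).hasDerivWithinAt) hg'u.intervalIntegrable
    have h0 : (∫ r in a..b, g' r) = 0 := by
      rw [hFTC]; simp [hGdef, hΨa, hΨb]
    rwa [intervalIntegral.integral_of_le hab', integral_Ioc_eq_integral_Ioo] at h0
  have hInt : ∀ f : ℝ → ℝ, ContinuousOn f S → IntegrableOn f (Set.Ioo a b) := fun f hf =>
    (hf.integrableOn_compact isCompact_Icc).mono_set Set.Ioo_subset_Icc_self
  -- continuous versions of integrands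
  set f1 : ℝ → ℝ := fun r => r * (φ2 r + φ r / r - ((n:ℝ)+1)^2 * Ψ r / r^2)^2 with hf1
  set f2 : ℝ → ℝ := fun r => r * (φ2 r + φ r / r - (n:ℝ)^2 * Ψ r / r^2)^2 with hf2
  set f3 : ℝ → ℝ := fun r => (2/r) * (φ r - Ψ r / r)^2 with hf3
  set f4 : ℝ → ℝ := fun r => (Ψ r)^2 / r^3 with hf4
  have hbase : ∀ c : ℝ, ContinuousOn (fun r => φ2 r + φ r / r - c * Ψ r / r^2) S := by
    intro c
    exact (hφ2c.add (hφc.div continuousOn_id hr0)).sub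
      ((continuousOn_const.mul hΨc).div (continuousOn_id.pow 2)
        (fun r hr => pow_ne_zero 2 (hr0 r hr)))
  have hf1c : ContinuousOn f1 S := continuousOn_id.mul ((hbase _).pow 2)
  have hf2c : ContinuousOn f2 S := continuousOn_id.mul ((hbase _).pow 2)
  have hf3c : ContinuousOn f3 S :=
    (continuousOn_const.div continuousOn_id hr0).mul
      ((hφc.sub (hΨc.div continuousOn_id hr0)).pow 2)
  have hf4c : ContinuousOn f4 S :=
    (hΨc.pow 2).div (continuousOn_id.pow 3) (fun r hr => pow_ne_zero 3 (hr0 r hr))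
  have hcong1 : (∫ r in Set.Ioo a b, r * (DeltaOp (n+1) Ψ r)^2) = ∫ r in Set.Ioo a b, f1 r := by
    refine setIntegral_congr_fun measurableSet_Ioo (fun r hr => ?_)
    simp only [DeltaOp, hf1, hderiv1 r hr, hderiv2 r hr]
    push_cast
    ring
  have hcong2 : (∫ r in Set.Ioo a b, r * (DeltaOp n Ψ r)^2) = ∫ r in Set.Ioo a b, f2 r := by
    refine setIntegral_congr_fun measurableSet_Ioo (fun r hr => ?_)
    simp only [DeltaOp, hf2, hderiv1 r hr, hderiv2 r hr]
  have hcong3 : (∫ r in Set.Ioo a b, (2 / r) * (deriv Ψ r - Ψ r / r) ^ 2)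
      = ∫ r in Set.Ioo a b, f3 r := by
    refine setIntegral_congr_fun measurableSet_Ioo (fun r hr => ?_)
    simp only [hf3, hderiv1 r hr]
  have hptwise : ∀ r ∈ Set.Ioo a b,
      f1 r - f2 r - (2*(n:ℝ)+1) * f3 r
        = (2*(n:ℝ)+1) * g' r + ((2*(n:ℝ)+1)*(2*(n:ℝ)^2+2*(n:ℝ)-1)) * f4 r := by
    intro r hr
    have hrne : r ≠ 0 := hr0 r (Set.Ioo_subset_Icc_self hr)
    simp only [hf1, hf2, hf3, hf4, hg'def]
    field_simp
    ring
  have hmain : (∫ r in Set.Ioo a b, f1 r) - (∫ r in Set.Ioo a b, f2 r)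
      - (2*(n:ℝ)+1) * (∫ r in Set.Ioo a b, f3 r)
      = (2*(n:ℝ)+1) * (∫ r in Set.Ioo a b, g' r)
      + ((2*(n:ℝ)+1)*(2*(n:ℝ)^2+2*(n:ℝ)-1)) * (∫ r in Set.Ioo a b, f4 r) := by
    have e1 : (∫ r in Set.Ioo a b, (f1 r - f2 r - (2*(n:ℝ)+1) * f3 r))
        = (∫ r in Set.Ioo a b, f1 r) - (∫ r in Set.Ioo a b, f2 r)
          - (2*(n:ℝ)+1) * (∫ r in Set.Ioo a b, f3 r) := by
      have h12 : IntegrableOn (fun r => f1 r - f2 r) (Set.Ioo a b) volume :=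
        (hInt f1 hf1c).sub (hInt f2 hf2c)
      have h3 : IntegrableOn (fun r => (2*(n:ℝ)+1) * f3 r) (Set.Ioo a b) volume :=
        (hInt f3 hf3c).const_mul _
      rw [integral_sub h12 h3, integral_sub (hInt f1 hf1c) (hInt f2 hf2c), integral_const_mul]
    have e2 : (∫ r in Set.Ioo a b,
          ((2*(n:ℝ)+1) * g' r + ((2*(n:ℝ)+1)*(2*(n:ℝ)^2+2*(n:ℝ)-1)) * f4 r))
        = (2*(n:ℝ)+1) * (∫ r in Set.Ioo a b, g' r)
          + ((2*(n:ℝ)+1)*(2*(n:ℝ)^2+2*(n:ℝ)-1)) * (∫ r in Set.Ioo a b, f4 r) := by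
      have hg : IntegrableOn (fun r => (2*(n:ℝ)+1) * g' r) (Set.Ioo a b) volume :=
        (hInt g' hg'c).const_mul _
      have h4 : IntegrableOn
          (fun r => ((2*(n:ℝ)+1)*(2*(n:ℝ)^2+2*(n:ℝ)-1)) * f4 r) (Set.Ioo a b) volume :=
        (hInt f4 hf4c).const_mul _
      rw [integral_add hg h4, integral_const_mul, integral_const_mul]
    rw [← e1, ← e2]
    exact setIntegral_congr_fun measurableSet_Ioo (fun r hr => hptwise r hr)
  have hfinal : (∫ r in Set.Ioo a b, f1 r) - (∫ r in Set.Ioo a b, f2 r)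
      - (2*(n:ℝ)+1) * (∫ r in Set.Ioo a b, f3 r)
      = ((2*(n:ℝ)+1)*(2*(n:ℝ)^2+2*(n:ℝ)-1)) * (∫ r in Set.Ioo a b, f4 r) := by
    rw [hmain, hK]; ring
  have hn' : (1:ℝ) ≤ (n:ℝ) := by exact_mod_cast hn
  have hcpos : 0 < (2*(n:ℝ)+1)*(2*(n:ℝ)^2+2*(n:ℝ)-1) := by nlinarith
  have hDnonneg : 0 ≤ ∫ r in Set.Ioo a b, f4 r := by
    refine setIntegral_nonneg measurableSet_Ioo (fun r hr => ?_)
    have hrpos : 0 < r := ha.trans hr.1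
    simp only [hf4]
    positivity
  have hDpos : (∃ r ∈ Set.Icc a b, Ψ r ≠ 0) → 0 < ∫ r in Set.Ioo a b, f4 r := by
    rintro ⟨r₀, hr₀, hne⟩
    have hr₀' : r₀ ∈ Set.Ioo a b := by
      constructor
      · rcases eq_or_lt_of_le hr₀.1 with h | h
        · exact absurd (h ▸ hΨa) hne
        · exact h
      · rcases eq_or_lt_of_le hr₀.2 with h | h
        · exact absurd (by rw [h]; exact hΨb) hne
        · exact h
    refine (setIntegral_pos_iff_support_of_nonneg_ae ?_ (hInt f4 hf4c)).2 ?_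
    · filter_upwards [ae_restrict_mem measurableSet_Ioo] with r hr
      have hrpos : 0 < r := ha.trans hr.1
      simp only [hf4]
      positivity
    · have hcont : ContinuousAt f4 r₀ := hf4c.continuousAt (hrS r₀ hr₀')
      have hr₀pos : 0 < r₀ := ha.trans hr₀'.1
      have hne4 : f4 r₀ ≠ 0 := by
        simp only [hf4]
        exact div_ne_zero (pow_ne_zero 2 hne) (pow_ne_zero 3 hr₀pos.ne')
      have hev : ∀ᶠ x in nhds r₀, f4 x ≠ 0 := hcont.eventually_ne hne4
      rcases mem_nhds_iff.1 hev with ⟨U, hUsub, hUopen, hr₀U⟩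
      have hmeas : 0 < volume (U ∩ Set.Ioo a b) :=
        (hUopen.inter isOpen_Ioo).measure_pos volume ⟨r₀, hr₀U, hr₀'⟩
      refine lt_of_lt_of_le hmeas (measure_mono ?_)
      exact Set.inter_subset_inter_left _ (fun x hx => hUsub hx)
  constructor
  · rw [ge_iff_le, hcong1, hcong2, hcong3]
    nlinarith [mul_nonneg hcpos.le hDnonneg]
  · intro hex
    rw [hcong1, hcong2, hcong3]
    nlinarith [mul_pos hcpos (hDpos hex)]
end

section
/- Let 0 < a < b. For each natural number n ≥ 1 define γ_n as the infimum of (∫_a^b r ((Δ_nΦ)(r))² dr)/(Φ'(a))² over all functions Φ : ℝ → ℝ that are twice continuously differentiable on [a, b] and satisfy Φ(a) = Φ(b) = 0 and Φ'(a) ≠ 0. Then γ_n ≤ γ_{n+1} for every n ≥ 1. -/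
open MeasureTheory
open Set

lemma key_ineq (a b : ℝ) (ha : 0 < a) (hab : a < b) (n : ℕ) (hn : 1 ≤ n)
    (Φ : ℝ → ℝ) (hΦ : ContDiffOn ℝ 2 Φ (Icc a b)) (hA : Φ a = 0) (hB : Φ b = 0) :
    (∫ r in Ioo a b, r * (DeltaOp n Φ r) ^ 2) ≤ ∫ r in Ioo a b, r * (DeltaOp (n+1) Φ r) ^ 2 := by
  have hab' : a ≤ b := hab.le
  have hs : UniqueDiffOn ℝ (Icc a b) := uniqueDiffOn_Icc hab
  set g : ℝ → ℝ := derivWithin Φ (Icc a b) with hgdef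
  set g' : ℝ → ℝ := derivWithin g (Icc a b) with hg'def
  have hg : ContDiffOn ℝ 1 g (Icc a b) := hΦ.derivWithin hs (by norm_num)
  have hΦc : ContinuousOn Φ (Icc a b) := hΦ.continuousOn
  have hgc : ContinuousOn g (Icc a b) := hg.continuousOn
  have hg'c : ContinuousOn g' (Icc a b) := (hg.derivWithin (m := 0) hs (by norm_num)).continuousOn
  have hx0 : ∀ x ∈ Icc a b, x ≠ 0 := fun x hx => (lt_of_lt_of_le ha hx.1).ne'
  have hΦd : ∀ x ∈ Ioo a b, HasDerivAt Φ (g x) x := by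
    intro x hx
    exact ((hΦ.differentiableOn (by norm_num) x (Ioo_subset_Icc_self hx)).hasDerivWithinAt).hasDerivAt
      (Icc_mem_nhds hx.1 hx.2)
  have hgd : ∀ x ∈ Ioo a b, HasDerivAt g (g' x) x := by
    intro x hx
    exact ((hg.differentiableOn (by norm_num) x (Ioo_subset_Icc_self hx)).hasDerivWithinAt).hasDerivAt
      (Icc_mem_nhds hx.1 hx.2)
  have hD : ∀ (m : ℕ), ∀ x ∈ Ioo a b, DeltaOp m Φ x = g' x + g x / x - (m:ℝ)^2 * Φ x / x^2 := by
    intro m x hx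
    have hEq : ∀ y ∈ Ioo a b, deriv Φ y = g y := by
      intro y hy
      exact (derivWithin_of_mem_nhds (Icc_mem_nhds hy.1 hy.2)).symm
    have h1 : deriv (deriv Φ) x = g' x := by
      have he : deriv Φ =ᶠ[nhds x] g := by
        filter_upwards [isOpen_Ioo.mem_nhds hx] with y hy using hEq y hy
      rw [he.deriv_eq, hg'def, derivWithin_of_mem_nhds (Icc_mem_nhds hx.1 hx.2)]
    unfold DeltaOp
    rw [h1, hEq x hx]
  -- conversion between set integrals on Ioo and interval integrals
  have hIoo : ∀ (f : ℝ → ℝ), (∫ r in Ioo a b, f r) = ∫ r in a..b, f r := by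
    intro f
    rw [intervalIntegral.integral_of_le hab', integral_Ioc_eq_integral_Ioo]
  have hInt : ∀ (f : ℝ → ℝ), ContinuousOn f (Icc a b) → IntervalIntegrable f volume a b := by
    intro f hf
    exact ContinuousOn.intervalIntegrable (by rwa [uIcc_of_le hab'])
  have hrc : ContinuousOn (fun r : ℝ => r) (Icc a b) := continuousOn_id
  -- continuity of the pieces
  have hP1c : ContinuousOn (fun r => g r ^ 2 / r) (Icc a b) := (hgc.pow 2).div hrc hx0
  have hP2c : ContinuousOn (fun r => Φ r ^ 2 / r ^ 3) (Icc a b) :=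
    (hΦc.pow 2).div (hrc.pow 3) (fun x hx => pow_ne_zero 3 (hx0 x hx))
  have hA1c : ContinuousOn (fun r => g r ^ 2 / r + Φ r * g' r / r - Φ r * g r / r ^ 2)
      (Icc a b) :=
    (hP1c.add ((hΦc.mul hg'c).div hrc hx0)).sub
      ((hΦc.mul hgc).div (hrc.pow 2) (fun x hx => pow_ne_zero 2 (hx0 x hx)))
  have hA2c : ContinuousOn (fun r => Φ r * g r / r ^ 2 - Φ r ^ 2 / r ^ 3) (Icc a b) :=
    (((hΦc.mul hgc).div (hrc.pow 2) (fun x hx => pow_ne_zero 2 (hx0 x hx)))).sub hP2c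
  -- first integration by parts : d/dr (Φ g / r)
  have E1 : (∫ r in a..b, (g r ^ 2 / r + Φ r * g' r / r - Φ r * g r / r ^ 2)) = 0 := by
    have hcont : ContinuousOn (fun r => Φ r * g r / r) (Icc a b) := (hΦc.mul hgc).div hrc hx0
    have hderiv : ∀ x ∈ Ioo a b, HasDerivWithinAt (fun r => Φ r * g r / r)
        (g x ^ 2 / x + Φ x * g' x / x - Φ x * g x / x ^ 2) (Ioi x) x := by
      intro x hx
      have hx0' : x ≠ 0 := hx0 x (Ioo_subset_Icc_self hx)
      have h := ((hΦd x hx).mul (hgd x hx)).div (hasDerivAt_id x) hx0'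
      have : HasDerivAt (fun r => Φ r * g r / r)
          (g x ^ 2 / x + Φ x * g' x / x - Φ x * g x / x ^ 2) x := by
        refine h.congr_deriv ?_
        simp only [id, Pi.mul_apply]
        field_simp
      exact this.hasDerivWithinAt
    have := intervalIntegral.integral_eq_sub_of_hasDeriv_right_of_le hab' hcont hderiv
      (hInt _ hA1c)
    rw [this, hA, hB]
    simp
  -- second integration by parts : d/dr (Φ² / (2 r²))
  have E2 : (∫ r in a..b, (Φ r * g r / r ^ 2 - Φ r ^ 2 / r ^ 3)) = 0 := by
    have hcont : ContinuousOn (fun r => Φ r ^ 2 / (2 * r ^ 2)) (Icc a b) :=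
      (hΦc.pow 2).div ((continuousOn_const.mul (hrc.pow 2)))
        (fun x hx => by have := hx0 x hx; positivity)
    have hderiv : ∀ x ∈ Ioo a b, HasDerivWithinAt (fun r => Φ r ^ 2 / (2 * r ^ 2))
        (Φ x * g x / x ^ 2 - Φ x ^ 2 / x ^ 3) (Ioi x) x := by
      intro x hx
      have hx0' : x ≠ 0 := hx0 x (Ioo_subset_Icc_self hx)
      have h := ((hΦd x hx).pow 2).div (((hasDerivAt_pow 2 x).const_mul 2))
        (by positivity : (2:ℝ) * x ^ 2 ≠ 0)
      have : HasDerivAt (fun r => Φ r ^ 2 / (2 * r ^ 2))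
          (Φ x * g x / x ^ 2 - Φ x ^ 2 / x ^ 3) x := by
        refine h.congr_deriv ?_
        simp only [Pi.pow_apply]
        field_simp
        ring
      exact this.hasDerivWithinAt
    have := intervalIntegral.integral_eq_sub_of_hasDeriv_right_of_le hab' hcont hderiv
      (hInt _ hA2c)
    rw [this, hA, hB]
    simp
  -- main computation
  set c : ℝ := 2 * (n:ℝ) + 1 with hc
  set K : ℝ := c * (2 * (n:ℝ) ^ 2 + 2 * (n:ℝ) - 3) with hK
  set D : ℕ → ℝ → ℝ := fun m r => g' r + g r / r - (m:ℝ) ^ 2 * Φ r / r ^ 2 with hDdef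
  have hDc : ∀ m : ℕ, ContinuousOn (fun r => r * D m r ^ 2) (Icc a b) := by
    intro m
    exact hrc.mul (((hg'c.add (hgc.div hrc hx0)).sub
      ((continuousOn_const.mul hΦc).div (hrc.pow 2)
        (fun x hx => pow_ne_zero 2 (hx0 x hx)))).pow 2)
  have key : (∫ r in a..b, r * D (n+1) r ^ 2) - (∫ r in a..b, r * D n r ^ 2)
      = 2 * c * (∫ r in a..b, g r ^ 2 / r) + K * (∫ r in a..b, Φ r ^ 2 / r ^ 3) := by
    rw [← intervalIntegral.integral_sub (hInt _ (hDc (n+1))) (hInt _ (hDc n))]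
    have hpt : EqOn (fun r => r * D (n+1) r ^ 2 - r * D n r ^ 2)
        (fun r => (-2*c) * (g r ^ 2 / r + Φ r * g' r / r - Φ r * g r / r ^ 2)
          + (-4*c) * (Φ r * g r / r ^ 2 - Φ r ^ 2 / r ^ 3)
          + ((2*c) * (g r ^ 2 / r) + K * (Φ r ^ 2 / r ^ 3))) (uIcc a b) := by
      intro r hr
      have hr0 : r ≠ 0 := by
        rw [uIcc_of_le hab'] at hr
        exact hx0 r hr
      simp only [hDdef, hc, hK]
      push_cast
      field_simp
      ring
    rw [intervalIntegral.integral_congr hpt]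
    rw [intervalIntegral.integral_add (((hInt _ hA1c).const_mul _).add
        ((hInt _ hA2c).const_mul _)) (((hInt _ hP1c).const_mul _).add
        ((hInt _ hP2c).const_mul _)),
      intervalIntegral.integral_add ((hInt _ hA1c).const_mul _) ((hInt _ hA2c).const_mul _),
      intervalIntegral.integral_add ((hInt _ hP1c).const_mul _) ((hInt _ hP2c).const_mul _),
      intervalIntegral.integral_const_mul, intervalIntegral.integral_const_mul,
      intervalIntegral.integral_const_mul, intervalIntegral.integral_const_mul, E1, E2]
    ring
  -- nonnegativity of the two extra terms
  have hJ1 : 0 ≤ ∫ r in a..b, g r ^ 2 / r :=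
    intervalIntegral.integral_nonneg hab' (fun u hu =>
      div_nonneg (sq_nonneg _) ((ha.trans_le hu.1).le))
  have hJ2 : 0 ≤ ∫ r in a..b, Φ r ^ 2 / r ^ 3 :=
    intervalIntegral.integral_nonneg hab' (fun u hu =>
      div_nonneg (sq_nonneg _) (pow_nonneg ((ha.trans_le hu.1).le) 3))
  have hc0 : 0 ≤ c := by positivity
  have hK0 : 0 ≤ K := by
    have hn1 : (1:ℝ) ≤ (n:ℝ) := by exact_mod_cast hn
    rw [hK]
    nlinarith
  have hfin : (∫ r in a..b, r * D n r ^ 2) ≤ ∫ r in a..b, r * D (n+1) r ^ 2 := by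
    nlinarith [mul_nonneg hc0 hJ1, mul_nonneg hK0 hJ2]
  calc (∫ r in Ioo a b, r * DeltaOp n Φ r ^ 2)
      = ∫ r in a..b, r * D n r ^ 2 := by
        rw [← hIoo]
        refine setIntegral_congr_fun measurableSet_Ioo (fun x hx => ?_)
        rw [hD n x hx]
    _ ≤ ∫ r in a..b, r * D (n+1) r ^ 2 := hfin
    _ = ∫ r in Ioo a b, r * DeltaOp (n+1) Φ r ^ 2 := by
        rw [← hIoo]
        refine (setIntegral_congr_fun measurableSet_Ioo (fun x hx => ?_)).symm
        rw [hD (n+1) x hx]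

/-- `γ_n`: the infimum of `(∫_a^b r ((Δ_nΦ)(r))² dr) / (Φ'(a))²` over all `Φ` that are twice
continuously differentiable on `[a, b]` with `Φ(a) = Φ(b) = 0` and `Φ'(a) ≠ 0`. -/
noncomputable def gamma (a b : ℝ) (n : ℕ) : ℝ :=
  sInf {y : ℝ | ∃ Φ : ℝ → ℝ, ContDiffOn ℝ 2 Φ (Set.Icc a b) ∧ Φ a = 0 ∧ Φ b = 0 ∧
    derivWithin Φ (Set.Icc a b) a ≠ 0 ∧
    y = (∫ r in Set.Ioo a b, r * (DeltaOp n Φ r) ^ 2) / (derivWithin Φ (Set.Icc a b) a) ^ 2}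

/-- For `0 < a < b`, the variational values satisfy `γ_n ≤ γ_{n+1}` for every
`n ≥ 1`. -/
theorem gamma_monotone (a b : ℝ) (ha : 0 < a) (hab : a < b) :
    ∀ n : ℕ, 1 ≤ n → gamma a b n ≤ gamma a b (n + 1) := by
  intro n hn
  have hab' : a ≤ b := hab.le
  -- a witness test function
  set Φ₀ : ℝ → ℝ := fun r => (r - a) * (b - r) with hΦ₀
  have hd : ∀ x : ℝ, HasDerivAt Φ₀ (b + a - 2*x) x := by
    intro x
    have h := ((hasDerivAt_id x).sub_const a).mul ((hasDerivAt_const x b).sub (hasDerivAt_id x))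
    refine h.congr_deriv ?_
    simp only [id, Pi.sub_apply]
    ring
  have hda : derivWithin Φ₀ (Set.Icc a b) a = b - a := by
    rw [DifferentiableAt.derivWithin (hd a).differentiableAt
      ((uniqueDiffOn_Icc hab) a (Set.left_mem_Icc.2 hab')), (hd a).deriv]
    ring
  have hda0 : derivWithin Φ₀ (Set.Icc a b) a ≠ 0 := by
    rw [hda]; exact sub_ne_zero.2 hab.ne'
  have hΦ₀smooth : ContDiffOn ℝ 2 Φ₀ (Set.Icc a b) :=
    (((contDiff_id.sub contDiff_const).mul (contDiff_const.sub contDiff_id)).contDiffOn)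
  have hmem : ∀ m : ℕ, ((∫ r in Set.Ioo a b, r * (DeltaOp m Φ₀ r) ^ 2) /
      (derivWithin Φ₀ (Set.Icc a b) a) ^ 2) ∈
      {y : ℝ | ∃ Φ : ℝ → ℝ, ContDiffOn ℝ 2 Φ (Set.Icc a b) ∧ Φ a = 0 ∧ Φ b = 0 ∧
        derivWithin Φ (Set.Icc a b) a ≠ 0 ∧
        y = (∫ r in Set.Ioo a b, r * (DeltaOp m Φ r) ^ 2) /
          (derivWithin Φ (Set.Icc a b) a) ^ 2} := by
    intro m
    exact ⟨Φ₀, hΦ₀smooth, by simp [hΦ₀], by simp [hΦ₀], hda0, rfl⟩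
  have hbdd : ∀ m : ℕ, BddBelow {y : ℝ | ∃ Φ : ℝ → ℝ, ContDiffOn ℝ 2 Φ (Set.Icc a b) ∧
      Φ a = 0 ∧ Φ b = 0 ∧ derivWithin Φ (Set.Icc a b) a ≠ 0 ∧
      y = (∫ r in Set.Ioo a b, r * (DeltaOp m Φ r) ^ 2) /
        (derivWithin Φ (Set.Icc a b) a) ^ 2} := by
    intro m
    refine ⟨0, fun y hy => ?_⟩
    obtain ⟨Φ, hΦ, hA, hB, hd0, rfl⟩ := hy
    refine div_nonneg ?_ (sq_nonneg _)
    refine setIntegral_nonneg measurableSet_Ioo (fun x hx => ?_)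
    have hx' : 0 ≤ x := (ha.trans hx.1).le
    positivity
  unfold gamma
  refine le_csInf ⟨_, hmem (n+1)⟩ (fun y hy => ?_)
  obtain ⟨Φ, hΦ, hA, hB, hd0, rfl⟩ := hy
  refine csInf_le_of_le (hbdd n) ⟨Φ, hΦ, hA, hB, hd0, rfl⟩ ?_
  have hd2 : (0:ℝ) < (derivWithin Φ (Set.Icc a b) a) ^ 2 :=
    lt_of_le_of_ne (sq_nonneg _) (Ne.symm (pow_ne_zero 2 hd0))
  exact (div_le_div_iff_of_pos_right hd2).mpr (key_ineq a b ha hab n hn Φ hΦ hA hB)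
end
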